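/- Let n ≥ 1, d ≥ 1. Let f₁,…,f_P and g₁,…,g_N be homogeneous polynomials of degree d−1 in ℂ[z₁,…,zₙ], and let h₁,…,h_K be polynomials in ℂ[z₁,…,zₙ] such that for all z ∈ ℂⁿ, (Σⱼ |fⱼ(z)|² − Σₖ |gₖ(z)|²)·(Σᵢ |zᵢ|²) = Σₗ |hₗ(z)|². Then the degree-d homogeneous components of the ideal ⟨f₁,…,f_P⟩ and of the ideal ⟨f₁,…,f_P,g₁,…,g_N⟩ in ℂ[z₁,…,zₙ] coincide; in particular their ℂ-dimensions are equal. -/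

import Mathlib

open MvPolynomial

open Complex

/-- A polynomial over `ℂ` vanishing at all real points is zero. -/
lemma aux_eq_zero_of_eval_real : ∀ {m : ℕ} (F : MvPolynomial (Fin m) ℂ),
    (∀ x : Fin m → ℝ, eval (fun i => (x i : ℂ)) F = 0) → F = 0 := by
  intro m
  induction m with
  | zero =>
    intro F hF
    have h0 := hF (fun i => 0)
    rw [eq_C_of_isEmpty F, eval_C] at h0
    rw [eq_C_of_isEmpty F, h0, map_zero]
  | succ m ih =>
    intro F hF
    have key : ∀ x : Fin m → ℝ,
        Polynomial.map (eval fun i => (x i : ℂ)) (finSuccEquiv ℂ m F) = 0 := by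
      intro x
      apply Polynomial.eq_zero_of_infinite_isRoot
      apply Set.Infinite.mono (s := Set.range (fun t : ℝ => (t : ℂ)))
      · rintro _ ⟨t, rfl⟩
        have h1 := hF (Fin.cons t x)
        have h2 : (fun i => ((Fin.cons t x : Fin (m+1) → ℝ) i : ℂ))
            = Fin.cons (t : ℂ) (fun i => (x i : ℂ)) := by
          funext i
          refine Fin.cases ?_ ?_ i <;> simp
        rw [h2, eval_eq_eval_mv_eval'] at h1
        exact h1
      · exact Set.infinite_range_of_injective (fun a b hab => by exact_mod_cast hab)
    have hcoeff : ∀ k, (finSuccEquiv ℂ m F).coeff k = 0 := by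
      intro k
      apply ih
      intro x
      have := key x
      have := congrArg (fun P => Polynomial.coeff P k) this
      simpa [Polynomial.coeff_map] using this
    have : finSuccEquiv ℂ m F = 0 := Polynomial.ext (by simp [hcoeff])
    simpa using congrArg (finSuccEquiv ℂ m).symm this

lemma aux_aeval_eq_eval {σ : Type*} (v : σ → ℂ) (p : MvPolynomial σ ℂ) :
    aeval v p = eval v p := by
  rw [← coe_aeval_eq_eval]; rfl

lemma aux_eq_zero_of_eval_antidiag {n : ℕ} (Q : MvPolynomial (Fin n ⊕ Fin n) ℂ)
    (hQ : ∀ z : Fin n → ℂ, eval (Sum.elim z (fun i => (starRingEnd ℂ) (z i))) Q = 0) :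
    Q = 0 := by
  set S : MvPolynomial (Fin n ⊕ Fin n) ℂ →ₐ[ℂ] MvPolynomial (Fin n ⊕ Fin n) ℂ :=
    aeval (Sum.elim (fun i => X (Sum.inl i) + C Complex.I * X (Sum.inr i))
                    (fun i => X (Sum.inl i) - C Complex.I * X (Sum.inr i))) with hS
  set T : MvPolynomial (Fin n ⊕ Fin n) ℂ →ₐ[ℂ] MvPolynomial (Fin n ⊕ Fin n) ℂ :=
    aeval (Sum.elim (fun i => C (1/2 : ℂ) * (X (Sum.inl i) + X (Sum.inr i)))
                    (fun i => C (1/(2*Complex.I) : ℂ) * (X (Sum.inl i) - X (Sum.inr i)))) with hT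
  have hTS : T.comp S = AlgHom.id ℂ _ := by
    apply MvPolynomial.algHom_ext
    rintro (i | i) <;>
      · simp only [AlgHom.comp_apply, hS, hT, aeval_X, Sum.elim_inl, Sum.elim_inr,
          map_add, map_sub, map_mul, aeval_C, algebraMap_eq]
        rw [AlgHom.id_apply]
        simp only [← smul_eq_C_mul]
        match_scalars <;> field_simp <;> ring
  have hSQ : S Q = 0 := by
    have hren : rename (finSumFinEquiv (m := n) (n := n)) (S Q) = 0 := by
      apply aux_eq_zero_of_eval_real
      intro x
      rw [eval_rename]
      set g : Fin n ⊕ Fin n → ℂ := (fun i => (x i : ℂ)) ∘ finSumFinEquiv with hg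
      set z : Fin n → ℂ := fun i => g (Sum.inl i) + Complex.I * g (Sum.inr i) with hz
      have hreal : ∀ i, (starRingEnd ℂ) (z i) = g (Sum.inl i) - Complex.I * g (Sum.inr i) := by
        intro i
        simp only [hz, hg, Function.comp, map_add, map_mul, Complex.conj_I, Complex.conj_ofReal]
        ring
      calc eval g (S Q)
          = aeval (fun s => aeval g
              (Sum.elim (fun i => X (Sum.inl i) + C Complex.I * X (Sum.inr i))
                (fun i => X (Sum.inl i) - C Complex.I * X (Sum.inr i)) s)) Q := by
            rw [hS, ← aux_aeval_eq_eval, comp_aeval_apply]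
        _ = eval (Sum.elim z (fun i => (starRingEnd ℂ) (z i))) Q := by
            rw [aux_aeval_eq_eval]
            have hv : (fun s => aeval g
                (Sum.elim (fun i => X (Sum.inl i) + C Complex.I * X (Sum.inr i))
                  (fun i => X (Sum.inl i) - C Complex.I * X (Sum.inr i)) s))
                = Sum.elim z (fun i => (starRingEnd ℂ) (z i)) := by
              funext s
              cases s with
              | inl i => simp [hz]
              | inr i => simp [hreal i]
            rw [hv]
        _ = 0 := hQ z
    have hinj := rename_injective (R := ℂ) (finSumFinEquiv (m := n) (n := n))
      (finSumFinEquiv (m := n) (n := n)).injective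
    apply hinj
    rw [hren, map_zero]
  have := congrArg T hSQ
  rw [map_zero] at this
  calc Q = (T.comp S) Q := by rw [hTS]; rfl
    _ = 0 := this

/-- conj of an evaluation equals evaluation of the conjugated polynomial at conjugated point. -/
lemma aux_conj_eval {n : ℕ} (w : Fin n → ℂ) (p : MvPolynomial (Fin n) ℂ) :
    (starRingEnd ℂ) (eval w p) = eval (fun i => (starRingEnd ℂ) (w i)) (map (starRingEnd ℂ) p) := by
  rw [eval_map]
  have h : eval w p = eval₂ (RingHom.id ℂ) w p := rfl
  rw [h, eval₂_comp_left (starRingEnd ℂ) (RingHom.id ℂ) w p, RingHom.comp_id]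
  rfl

/-- Polarization: equality of sums of squared moduli gives, for each `w`,
equality of the corresponding linear combinations. -/
lemma aux_polarize {n : ℕ} {A B : Type*} [Fintype A] [Fintype B]
    (p : A → MvPolynomial (Fin n) ℂ) (q : B → MvPolynomial (Fin n) ℂ)
    (hpq : ∀ z : Fin n → ℂ,
      ∑ a, Complex.normSq (eval z (p a)) = ∑ b, Complex.normSq (eval z (q b)))
    (w : Fin n → ℂ) :
    ∑ a, (starRingEnd ℂ) (eval w (p a)) • p a
      = ∑ b, (starRingEnd ℂ) (eval w (q b)) • q b := by
  classical
  set lift : MvPolynomial (Fin n) ℂ → MvPolynomial (Fin n ⊕ Fin n) ℂ :=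
    fun r => rename Sum.inl r * rename Sum.inr (map (starRingEnd ℂ) r) with hlift
  set Φ : MvPolynomial (Fin n ⊕ Fin n) ℂ :=
    (∑ a, lift (p a)) - ∑ b, lift (q b) with hΦ
  have heval : ∀ (z w' : Fin n → ℂ) (r : MvPolynomial (Fin n) ℂ),
      eval (Sum.elim z (fun i => (starRingEnd ℂ) (w' i))) (lift r)
        = eval z r * (starRingEnd ℂ) (eval w' r) := by
    intro z w' r
    rw [hlift]
    simp only [map_mul, eval_rename, Sum.elim_comp_inl, Sum.elim_comp_inr]
    rw [← aux_conj_eval]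
  have hΦ0 : Φ = 0 := by
    apply aux_eq_zero_of_eval_antidiag
    intro z
    rw [hΦ]
    simp only [map_sub, map_sum, heval z z]
    have : ∀ r : MvPolynomial (Fin n) ℂ,
        eval z r * (starRingEnd ℂ) (eval z r) = (Complex.normSq (eval z r) : ℂ) := by
      intro r; rw [mul_conj]
    simp only [this]
    rw [← Complex.ofReal_sum, ← Complex.ofReal_sum, sub_eq_zero]
    exact congrArg (fun t : ℝ => (t : ℂ)) (hpq z)
  -- now partially evaluate the second block of variables at conj w
  set ψ : MvPolynomial (Fin n ⊕ Fin n) ℂ →ₐ[ℂ] MvPolynomial (Fin n) ℂ :=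
    aeval (Sum.elim X (fun i => C ((starRingEnd ℂ) (w i)))) with hψ
  have hψlift : ∀ r : MvPolynomial (Fin n) ℂ,
      ψ (lift r) = ((starRingEnd ℂ) (eval w r)) • r := by
    intro r
    have h1 : ψ ((rename Sum.inl) r) = r := by
      rw [hψ, aeval_rename]
      simp [aeval_X_left]
    have h2 : ψ ((rename Sum.inr) (map (starRingEnd ℂ) r))
        = C ((starRingEnd ℂ) (eval w r)) := by
      rw [hψ, aeval_rename]
      have hcomp : (Sum.elim (X : Fin n → MvPolynomial (Fin n) ℂ)
            (fun i => C ((starRingEnd ℂ) (w i)))) ∘ Sum.inr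
          = fun i => (C ((starRingEnd ℂ) (w i)) : MvPolynomial (Fin n) ℂ) := rfl
      rw [hcomp, aux_conj_eval, aeval_def]
      have h3 := eval₂_comp_left (C : ℂ →+* MvPolynomial (Fin n) ℂ) (RingHom.id ℂ)
        (fun i => (starRingEnd ℂ) (w i)) (map (starRingEnd ℂ) r)
      simp only [RingHom.comp_id] at h3
      rw [algebraMap_eq]
      exact h3.symm
    rw [hlift, map_mul, h1, h2, smul_eq_C_mul, mul_comm]
  have := congrArg ψ hΦ0
  rw [hΦ, map_sub, map_sum, map_sum, map_zero, sub_eq_zero] at this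
  simpa only [hψlift] using this

/-- From the polarized identity, each `q b` lies in the span of the `p a`. -/
lemma aux_mem_span {n : ℕ} {A B : Type*} [Fintype A] [Fintype B]
    (p : A → MvPolynomial (Fin n) ℂ) (q : B → MvPolynomial (Fin n) ℂ)
    (hpq : ∀ z : Fin n → ℂ,
      ∑ a, Complex.normSq (eval z (p a)) = ∑ b, Complex.normSq (eval z (q b)))
    (b₀ : B) : q b₀ ∈ Submodule.span ℂ (Set.range p) := by
  classical
  have key := aux_polarize p q hpq
  set V := Submodule.span ℂ (Set.range p) with hV
  haveI : Module.Free ℂ (MvPolynomial (Fin n) ℂ ⧸ V) := Module.Free.of_divisionRing ℂ _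
  haveI : Module.Projective ℂ (MvPolynomial (Fin n) ℂ ⧸ V) := Module.Projective.of_free
  have hker : q b₀ ∈ LinearMap.ker V.mkQ := by
    rw [LinearMap.mem_ker]
    rw [← Module.forall_dual_apply_eq_zero_iff ℂ]
    intro φ
    set c : B → ℂ := fun b => φ (V.mkQ (q b)) with hc
    have hzero : ∀ w : Fin n → ℂ, ∑ b, (starRingEnd ℂ) (eval w (q b)) * c b = 0 := by
      intro w
      have h1 : V.mkQ (∑ b, (starRingEnd ℂ) (eval w (q b)) • q b) = 0 := by
        rw [← key w, ← LinearMap.mem_ker, Submodule.ker_mkQ]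
        exact Submodule.sum_mem _ fun a _ => Submodule.smul_mem _ _
          (Submodule.subset_span ⟨a, rfl⟩)
      have h2 := congrArg φ h1
      rw [map_zero, map_sum] at h2
      rw [← h2, map_sum]
      apply Finset.sum_congr rfl
      intro b _
      simp [hc, smul_eq_mul]
    have hpoly : (∑ b, (starRingEnd ℂ) (c b) • q b) = 0 := by
      apply MvPolynomial.funext
      intro w
      rw [map_zero, map_sum]
      have h3 := congrArg (starRingEnd ℂ) (hzero w)
      rw [map_zero, map_sum] at h3
      rw [← h3]
      apply Finset.sum_congr rfl
      intro b _
      simp [smul_eq_C_mul, map_mul, Complex.conj_conj, mul_comm]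
    have h4 := congrArg (fun r => φ (V.mkQ r)) hpoly
    simp only [map_sum, map_smul, map_zero, smul_eq_mul] at h4
    have hsum : ∑ b, Complex.normSq (c b) = 0 := by
      have h5 : ∑ b, (starRingEnd ℂ) (c b) * c b = 0 := by
        simpa [hc] using h4
      have h6 := congrArg Complex.re h5
      rw [Complex.re_sum] at h6
      simp only [Complex.zero_re] at h6
      rw [← h6]
      apply Finset.sum_congr rfl
      intro b _
      rw [mul_comm, Complex.mul_conj]
      simp
    have h7 : Complex.normSq (c b₀) = 0 :=
      (Finset.sum_eq_zero_iff_of_nonneg (fun b _ => Complex.normSq_nonneg _)).mp hsum b₀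
        (Finset.mem_univ b₀)
    rw [Complex.normSq_eq_zero] at h7
    exact h7
  rw [Submodule.ker_mkQ] at hker
  exact hker

/-- The degree-`ℓ` homogeneous component of an ideal `I`, as a subspace. -/
noncomputable def idealDegComp {n : ℕ} (I : Ideal (MvPolynomial (Fin n) ℂ)) (ℓ : ℕ) :
    Submodule ℂ (MvPolynomial (Fin n) ℂ) where
  carrier := {p | p ∈ I ∧ p.IsHomogeneous ℓ}
  add_mem' := fun ha hb => ⟨I.add_mem ha.1 hb.1, ha.2.add hb.2⟩
  zero_mem' := ⟨I.zero_mem, MvPolynomial.isHomogeneous_zero _ _ _⟩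
  smul_mem' := fun c p hp =>
    ⟨by simpa [MvPolynomial.smul_eq_C_mul] using I.mul_mem_left (MvPolynomial.C c) hp.1,
     by simpa [MvPolynomial.smul_eq_C_mul] using hp.2.C_mul c⟩

/-- Monomial exponent of degree 1 is a `single`. -/
lemma aux_degree_one_single {n : ℕ} (m : Fin n →₀ ℕ) (hm : m.degree = 1) :
    ∃ i, m = Finsupp.single i 1 := by
  classical
  have hcard : Multiset.card (Finsupp.toMultiset m) = 1 := by
    rw [Finsupp.card_toMultiset]
    have hm' : ∑ x ∈ m.support, m x = 1 := hm
    simpa [Finsupp.degree, Finsupp.sum] using hm'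
  obtain ⟨i, hi⟩ := Multiset.card_eq_one.mp hcard
  refine ⟨i, ?_⟩
  have := congrArg Multiset.toFinsupp hi
  rw [Finsupp.toMultiset_toFinsupp] at this
  rw [this]
  have : ({i} : Multiset (Fin n)) = Finsupp.toMultiset (Finsupp.single i 1) := by
    simp [Finsupp.toMultiset_single]
  rw [this, Finsupp.toMultiset_toFinsupp]

/-- A degree-1 homogeneous polynomial times `F` is in the span of the `X i * F`. -/
lemma aux_deg_one_mul_mem {n : ℕ} (q F : MvPolynomial (Fin n) ℂ)
    (hq : q.IsHomogeneous 1) :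
    q * F ∈ Submodule.span ℂ (Set.range fun i : Fin n => X i * F) := by
  classical
  rw [← support_sum_monomial_coeff q, Finset.sum_mul]
  apply Submodule.sum_mem
  intro m hm
  have hdeg : m.degree = 1 := by
    rw [Finsupp.degree_eq_weight_one]
    exact hq (mem_support_iff.mp hm)
  obtain ⟨i, rfl⟩ := aux_degree_one_single m hdeg
  rw [← C_mul_X_eq_monomial, mul_assoc, ← smul_eq_C_mul]
  exact Submodule.smul_mem _ _ (Submodule.subset_span ⟨i, rfl⟩)

/-- Homogeneous component of degree `d` of `c * F` for `F` homogeneous of degree `d-1`. -/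
lemma aux_hc_mul {n d : ℕ} (hd : 1 ≤ d) (c F : MvPolynomial (Fin n) ℂ)
    (hF : F.IsHomogeneous (d - 1)) :
    homogeneousComponent d (c * F) = homogeneousComponent 1 c * F := by
  classical
  conv_lhs => rw [show c * F = (∑ e ∈ Finset.range (c.totalDegree + 1),
    homogeneousComponent e c) * F from by rw [sum_homogeneousComponent]]
  rw [Finset.sum_mul, map_sum]
  have hterm : ∀ e, homogeneousComponent d (homogeneousComponent e c * F)
      = if e = 1 then homogeneousComponent e c * F else 0 := by
    intro e
    have hmem : homogeneousComponent e c * F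
        ∈ homogeneousSubmodule (Fin n) ℂ (e + (d - 1)) := by
      rw [mem_homogeneousSubmodule]
      exact (homogeneousComponent_isHomogeneous e c).mul hF
    rw [homogeneousComponent_of_mem hmem]
    congr 1
    simp only [eq_iff_iff]
    omega
  simp_rw [hterm]
  rw [Finset.sum_ite_eq' (Finset.range (c.totalDegree + 1)) 1
    (fun e => homogeneousComponent e c * F)]
  by_cases h1 : 1 ∈ Finset.range (c.totalDegree + 1)
  · rw [if_pos h1]
  · rw [if_neg h1]
    have : c.totalDegree = 0 := by
      simp only [Finset.mem_range] at h1
      omega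
    rw [homogeneousComponent_eq_zero _ _ (by omega), zero_mul]

/-- The degree-`d` component of an ideal generated by homogeneous degree-`d-1`
polynomials is the span of the linear multiples of the generators. -/
lemma aux_idealDegComp_eq {n d : ℕ} (hd : 1 ≤ d) {A : Type*} [Fintype A]
    (F : A → MvPolynomial (Fin n) ℂ) (hF : ∀ a, (F a).IsHomogeneous (d - 1)) :
    idealDegComp (Ideal.span (Set.range F)) d
      = Submodule.span ℂ (Set.range fun ai : A × Fin n => X ai.2 * F ai.1) := by
  classical
  apply le_antisymm
  · rintro p ⟨hmem, hhom⟩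
    obtain ⟨c, hc⟩ := Ideal.mem_span_range_iff_exists_fun.mp hmem
    have hp : p = ∑ a, homogeneousComponent 1 (c a) * F a := by
      have h1 : homogeneousComponent d p = p := by
        rw [homogeneousComponent_of_mem (by rwa [mem_homogeneousSubmodule]),
          if_pos rfl]
      rw [← h1, ← hc, map_sum]
      exact Finset.sum_congr rfl fun a _ => aux_hc_mul hd (c a) (F a) (hF a)
    rw [hp]
    apply Submodule.sum_mem
    intro a _
    have := aux_deg_one_mul_mem (homogeneousComponent 1 (c a)) (F a)
      (homogeneousComponent_isHomogeneous 1 (c a))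
    refine Submodule.span_le.mpr ?_ this
    rintro _ ⟨i, rfl⟩
    exact Submodule.subset_span ⟨(a, i), rfl⟩
  · rw [Submodule.span_le]
    rintro _ ⟨⟨a, i⟩, rfl⟩
    refine ⟨Ideal.mul_mem_left _ _ (Ideal.subset_span ⟨a, rfl⟩), ?_⟩
    have := (isHomogeneous_X ℂ i).mul (hF a)
    have hdd : 1 + (d - 1) = d := by omega
    rwa [hdd] at this

/-- **Lemma 2.1 (D'Angelo).**  If `(‖f‖² − ‖g‖²)·‖z‖² = ‖h‖²` with the `fⱼ`, `gₖ`
homogeneous of degree `d−1`, then the degree-`d` components of the ideals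
`⟨f⟩` and `⟨f, g⟩` coincide; in particular their dimensions (Hilbert
functions at `d`) are equal. -/
theorem degree_d_components_coincide
    {n : ℕ} (hn : 1 ≤ n) {d : ℕ} (hd : 1 ≤ d) {P N K : ℕ}
    (f : Fin P → MvPolynomial (Fin n) ℂ)
    (g : Fin N → MvPolynomial (Fin n) ℂ)
    (h : Fin K → MvPolynomial (Fin n) ℂ)
    (hf : ∀ j, (f j).IsHomogeneous (d - 1))
    (hg : ∀ k, (g k).IsHomogeneous (d - 1))
    (hsos : ∀ z : Fin n → ℂ,
      ((∑ j, Complex.normSq (eval z (f j))) - ∑ k, Complex.normSq (eval z (g k)))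
        * (∑ i, Complex.normSq (z i)) = ∑ l, Complex.normSq (eval z (h l))) :
    idealDegComp (Ideal.span (Set.range f)) d
        = idealDegComp (Ideal.span (Set.range f ∪ Set.range g)) d ∧
      Module.finrank ℂ (idealDegComp (Ideal.span (Set.range f)) d)
        = Module.finrank ℂ (idealDegComp (Ideal.span (Set.range f ∪ Set.range g)) d) := by
  classical
  set p : Fin P × Fin n → MvPolynomial (Fin n) ℂ := fun ji => X ji.2 * f ji.1 with hp
  set q : (Fin N × Fin n) ⊕ Fin K → MvPolynomial (Fin n) ℂ :=
    Sum.elim (fun ki => X ki.2 * g ki.1) h with hq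
  -- sum-of-squares identity for the two families
  have hsum : ∀ (z : Fin n → ℂ) (u : Fin P → MvPolynomial (Fin n) ℂ),
      ∑ ji : Fin P × Fin n, Complex.normSq (eval z (X ji.2 * u ji.1))
        = (∑ j, Complex.normSq (eval z (u j))) * ∑ i, Complex.normSq (z i) := by
    intro z u
    rw [Fintype.sum_prod_type, Finset.sum_mul]
    apply Finset.sum_congr rfl
    intro j _
    rw [Finset.mul_sum]
    apply Finset.sum_congr rfl
    intro i _
    rw [map_mul, Complex.normSq_mul, eval_X, mul_comm]
  have hsum' : ∀ (z : Fin n → ℂ) (u : Fin N → MvPolynomial (Fin n) ℂ),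
      ∑ ji : Fin N × Fin n, Complex.normSq (eval z (X ji.2 * u ji.1))
        = (∑ j, Complex.normSq (eval z (u j))) * ∑ i, Complex.normSq (z i) := by
    intro z u
    rw [Fintype.sum_prod_type, Finset.sum_mul]
    apply Finset.sum_congr rfl
    intro j _
    rw [Finset.mul_sum]
    apply Finset.sum_congr rfl
    intro i _
    rw [map_mul, Complex.normSq_mul, eval_X, mul_comm]
  have hpq : ∀ z : Fin n → ℂ,
      ∑ a, Complex.normSq (eval z (p a)) = ∑ b, Complex.normSq (eval z (q b)) := by
    intro z
    rw [hp, hq, Fintype.sum_sum_type]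
    simp only [Sum.elim_inl, Sum.elim_inr]
    rw [hsum z f, hsum' z g]
    have := hsos z
    nlinarith [this]
  -- each X i * g k lies in the span of the X i * f j
  have hkey : ∀ ki : Fin N × Fin n, X ki.2 * g ki.1 ∈ Submodule.span ℂ (Set.range p) :=
    fun ki => by simpa [hq] using aux_mem_span p q hpq (Sum.inl ki)
  -- identify degree components
  set G : Fin P ⊕ Fin N → MvPolynomial (Fin n) ℂ := Sum.elim f g with hG
  have hGrange : Set.range G = Set.range f ∪ Set.range g := Set.Sum.elim_range f g
  have hGhom : ∀ s, (G s).IsHomogeneous (d - 1) := by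
    rintro (j | k)
    · exact hf j
    · exact hg k
  have e1 : idealDegComp (Ideal.span (Set.range f)) d = Submodule.span ℂ (Set.range p) :=
    aux_idealDegComp_eq hd f hf
  have e2 : idealDegComp (Ideal.span (Set.range f ∪ Set.range g)) d
      = Submodule.span ℂ (Set.range fun ai : (Fin P ⊕ Fin N) × Fin n => X ai.2 * G ai.1) := by
    rw [← hGrange]
    exact aux_idealDegComp_eq hd G hGhom
  have e3 : Submodule.span ℂ (Set.range fun ai : (Fin P ⊕ Fin N) × Fin n => X ai.2 * G ai.1)
      = Submodule.span ℂ (Set.range p) := by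
    apply le_antisymm
    · rw [Submodule.span_le]
      rintro _ ⟨⟨s, i⟩, rfl⟩
      cases s with
      | inl j => exact Submodule.subset_span ⟨(j, i), rfl⟩
      | inr k => exact hkey (k, i)
    · rw [Submodule.span_le]
      rintro _ ⟨⟨j, i⟩, rfl⟩
      exact Submodule.subset_span ⟨(Sum.inl j, i), rfl⟩
  have heq : idealDegComp (Ideal.span (Set.range f)) d
      = idealDegComp (Ideal.span (Set.range f ∪ Set.range g)) d := by
    rw [e1, e2, e3]
  exact ⟨heq, by rw [heq]⟩
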